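/- With notation as in the Aronszajn equation setting ($V = F^*JF$, $H_r = H_0 + rV$, $T_r(z) = F(H_r-z)^{-1}F^*$), for all non-real $z$ the identity $\mathrm{Im}\,T_r(z) = (1 + rT_0(\bar z)J)^{-1}\, \mathrm{Im}\,T_0(z)\, (1 + rJ\,T_0(z))^{-1}$ holds, where $\mathrm{Im}\,T = \frac{1}{2i}(T - T^*)$. -/
import Mathlib


open ContinuousLinearMap

noncomputable section

/-- The imaginary part `Im T = (T - T*)/(2i)` of a bounded operator. -/
def imOp {K : Type*} [NormedAddCommGroup K] [InnerProductSpace ℂ K] [CompleteSpace K]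
    (T : K →L[ℂ] K) : K →L[ℂ] K :=
  (2 * Complex.I)⁻¹ • (T - adjoint T)

/-- In the Aronszajn equation setting (`V = F*JF`, `H_r = H₀ + rV`, with the
self-adjoint operators `H_r` encoded by their resolvent families `R r z = (H_r - z)⁻¹`, and
`T_r(z) = F (R r z) F*`), for all non-real `z` the identity
`Im T_r(z) = (1 + r T₀(z̄) J)⁻¹ (Im T₀(z)) (1 + r J T₀(z))⁻¹` holds. -/
theorem im_Tr_eq_inv_mul_im_T0_mul_inv
    {H K : Type*} [NormedAddCommGroup H] [InnerProductSpace ℂ H] [CompleteSpace H]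
    [NormedAddCommGroup K] [InnerProductSpace ℂ K] [CompleteSpace K]
    (F : H →L[ℂ] K) (J : K →L[ℂ] K) (hJ : IsSelfAdjoint J)
    (R : ℝ → ℂ → (H →L[ℂ] H))
    (hadj : ∀ (r : ℝ) (z : ℂ), z.im ≠ 0 →
      adjoint (R r z) = R r ((starRingEnd ℂ) z))
    (hsri : ∀ (r : ℝ) (z : ℂ), z.im ≠ 0 →
      R r z - R 0 z
        = - (R r z).comp ((r • ((adjoint F).comp (J.comp F))).comp (R 0 z)))
    (T : ℝ → ℂ → (K →L[ℂ] K))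
    (hT : ∀ (r : ℝ) (z : ℂ), T r z = F.comp ((R r z).comp (adjoint F))) :
    ∀ (r : ℝ) (z : ℂ), z.im ≠ 0 →
      imOp (T r z)
        = Ring.inverse ((1 : K →L[ℂ] K) + r • (T 0 ((starRingEnd ℂ) z) * J))
            * imOp (T 0 z)
            * Ring.inverse ((1 : K →L[ℂ] K) + r • (J * T 0 z)) := by
  intro r z hz
  set j : K →L[ℂ] K := r • J with hj
  -- smul as complex smul
  have hrsmul : ∀ X : K →L[ℂ] K, r • X = ((r : ℂ)) • X := fun X => by
    rw [← smul_one_smul ℂ r X, Complex.real_smul, mul_one]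
  -- second resolvent identity, version 1 : T r z - T 0 z = -(T r z * (j * T 0 z))
  have k : ∀ (w : ℂ), w.im ≠ 0 → T r w - T 0 w = -(T r w * (j * T 0 w)) := by
    intro w hw
    ext x
    have h := congrArg (fun (A : H →L[ℂ] H) => F (A (adjoint F x))) (hsri r w hw)
    simpa [hT, mul_def, map_smul, hj, ContinuousLinearMap.smul_apply] using h
  -- adjoints / stars
  have hstar : ∀ (r' : ℝ) (w : ℂ), w.im ≠ 0 →
      star (T r' w) = T r' ((starRingEnd ℂ) w) := by
    intro r' w hw
    rw [star_eq_adjoint, hT, hT, adjoint_comp, adjoint_comp, adjoint_adjoint,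
      hadj r' w hw, comp_assoc]
  have hstarj : star j = j := by
    rw [hj, star_smul, star_trivial, hJ.star_eq]

  have hz' : ((starRingEnd ℂ) z).im ≠ 0 := by
    simpa using hz
  have hcc : (starRingEnd ℂ) ((starRingEnd ℂ) z) = z := Complex.conj_conj z
  set t := T r z with ht
  set s := T 0 z with hs
  set t' := T r ((starRingEnd ℂ) z) with ht'
  set s' := T 0 ((starRingEnd ℂ) z) with hs'
  -- the four second-resolvent-type identities
  have k1 : t - s = -(t * (j * s)) := k z hz
  have k3 : t' - s' = -(t' * (j * s')) := k _ hz'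
  have k2 : t - s = -(s * (j * t)) := by
    have h := congrArg star k3
    rw [star_sub, star_neg, star_mul, star_mul, hstar r _ hz', hstar 0 _ hz', hstarj, hcc] at h
    rw [h]; noncomm_ring
  have k4 : t' - s' = -(s' * (j * t')) := by
    have h := congrArg star k1
    rw [star_sub, star_neg, star_mul, star_mul, hstar r z hz, hstar 0 z hz, hstarj] at h
    rw [h]; noncomm_ring
  -- units
  have hB1 : ((1 : K →L[ℂ] K) + j * s) * (1 - j * t) = 1 := by
    have e : s - t = s * (j * t) := by rw [← neg_sub t s, k2, neg_neg]
    calc ((1 : K →L[ℂ] K) + j * s) * (1 - j * t)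
        = 1 + j * (s - t - s * (j * t)) := by noncomm_ring
      _ = 1 := by rw [sub_eq_zero.mpr e]; simp
  have hB2 : ((1 : K →L[ℂ] K) - j * t) * (1 + j * s) = 1 := by
    have e : s - t = t * (j * s) := by rw [← neg_sub t s, k1, neg_neg]
    calc ((1 : K →L[ℂ] K) - j * t) * (1 + j * s)
        = 1 + j * (s - t - t * (j * s)) := by noncomm_ring
      _ = 1 := by rw [sub_eq_zero.mpr e]; simp
  have hA1 : ((1 : K →L[ℂ] K) + s' * j) * (1 - t' * j) = 1 := by
    have e : s' - t' = s' * (j * t') := by rw [← neg_sub t' s', k4, neg_neg]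
    calc ((1 : K →L[ℂ] K) + s' * j) * (1 - t' * j)
        = 1 + (s' - t' - s' * (j * t')) * j := by noncomm_ring
      _ = 1 := by rw [sub_eq_zero.mpr e]; simp
  have hA2 : ((1 : K →L[ℂ] K) - t' * j) * (1 + s' * j) = 1 := by
    have e : s' - t' = t' * (j * s') := by rw [← neg_sub t' s', k3, neg_neg]
    calc ((1 : K →L[ℂ] K) - t' * j) * (1 + s' * j)
        = 1 + (s' - t' - t' * (j * s')) * j := by noncomm_ring
      _ = 1 := by rw [sub_eq_zero.mpr e]; simp
  -- Ring.inverse values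
  have hgoalA : (1 : K →L[ℂ] K) + r • (s' * J) = 1 + s' * j := by
    rw [hj, hrsmul J, mul_smul_comm, hrsmul]
  have hgoalB : (1 : K →L[ℂ] K) + r • (J * s) = 1 + j * s := by
    rw [hj, hrsmul J, smul_mul_assoc, hrsmul]
  have hinvA : Ring.inverse ((1 : K →L[ℂ] K) + r • (s' * J)) = 1 - t' * j := by
    rw [hgoalA]
    exact Ring.inverse_unit ⟨1 + s' * j, 1 - t' * j, hA1, hA2⟩
  have hinvB : Ring.inverse ((1 : K →L[ℂ] K) + r • (J * s)) = 1 - j * t := by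
    rw [hgoalB]
    exact Ring.inverse_unit ⟨1 + j * s, 1 - j * t, hB1, hB2⟩
  rw [hinvA, hinvB]
  -- main computation
  have e1 : s * ((1 : K →L[ℂ] K) - j * t) = t := by
    have e : s - t = s * (j * t) := by rw [← neg_sub t s, k2, neg_neg]
    calc s * ((1 : K →L[ℂ] K) - j * t) = s - s * (j * t) := by noncomm_ring
      _ = t := by rw [← e]; abel
  have e2 : ((1 : K →L[ℂ] K) - t' * j) * s' = t' := by
    have e : s' - t' = t' * (j * s') := by rw [← neg_sub t' s', k3, neg_neg]
    calc ((1 : K →L[ℂ] K) - t' * j) * s' = s' - t' * (j * s') := by noncomm_ring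
      _ = t' := by rw [← e]; abel
  have main : ((1 : K →L[ℂ] K) - t' * j) * (s - s') * (1 - j * t) = t - t' := by
    calc ((1 : K →L[ℂ] K) - t' * j) * (s - s') * (1 - j * t)
        = ((1 : K →L[ℂ] K) - t' * j) * (s * (1 - j * t))
            - (((1 : K →L[ℂ] K) - t' * j) * s') * (1 - j * t) := by noncomm_ring
      _ = ((1 : K →L[ℂ] K) - t' * j) * t - t' * (1 - j * t) := by rw [e1, e2]
      _ = t - t' := by noncomm_ring
  rw [imOp, imOp, ← star_eq_adjoint, ← star_eq_adjoint, hstar r z hz, hstar 0 z hz,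
    ← ht', ← hs', mul_smul_comm, smul_mul_assoc, main]

end
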